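/- Let n ≥ 1. In the complex Euclidean space with orthonormal standard basis {e_{(i,j)} : 0 ≤ i ≤ n, j = 0 or i < j ≤ n}, define for each 1 ≤ i ≤ n the vector v_i = (1/√n)(e_{(0,0)} + Σ_{j=i+1}^{n} e_{(i,j)} − Σ_{j=1}^{i−1} e_{(j,i)}). Then the family (v_1, …, v_n) is orthonormal: ⟨v_i, v_i⟩ = 1 for all i, and ⟨v_i, v_k⟩ = 0 for all i ≠ k. -/

import Mathlib

/-- Valid basis indices: `(i,0)` for `0 ≤ i ≤ n` (this includes `(0,0)`), and
`(i,j)` for `1 ≤ i < j ≤ n`. -/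
def ValidIdx (n : ℕ) (p : Fin (n + 1) × Fin (n + 1)) : Prop :=
  p.2.val = 0 ∨ (1 ≤ p.1.val ∧ p.1.val < p.2.val)

instance (n : ℕ) : DecidablePred (ValidIdx n) := fun p => by
  unfold ValidIdx; infer_instance

/-- The index set of the orthonormal standard basis. -/
abbrev BIdx (n : ℕ) := {p : Fin (n + 1) × Fin (n + 1) // ValidIdx n p}

/-- The standard basis vector `e_{(a,b)}`. -/
noncomputable def e (n : ℕ) (a b : Fin (n + 1)) (h : ValidIdx n (a, b)) :
    EuclideanSpace ℂ (BIdx n) :=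
  EuclideanSpace.single ⟨(a, b), h⟩ 1

/-- `v_i = (1/√n)(e_{(0,0)} + Σ_{j=i+1}^{n} e_{(i,j)} − Σ_{j=1}^{i−1} e_{(j,i)})`. -/
noncomputable def v (n : ℕ) (i : Fin (n + 1)) (hi : 1 ≤ i.val) :
    EuclideanSpace ℂ (BIdx n) :=
  ((Real.sqrt n : ℂ))⁻¹ •
    (e n 0 0 (Or.inl rfl)
      + (∑ j : Fin (n + 1), if h : i.val < j.val then e n i j (Or.inr ⟨hi, h⟩) else 0)
      - (∑ j : Fin (n + 1), if h : 1 ≤ j.val ∧ j.val < i.val then e n j i (Or.inr h) else 0))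

lemma inner_e (n : ℕ) (a b c d : Fin (n+1)) (h : ValidIdx n (a,b)) (h' : ValidIdx n (c,d)) :
    (inner ℂ (e n a b h) (e n c d h') : ℂ) = if a = c ∧ b = d then 1 else 0 := by
  rw [e, e, EuclideanSpace.inner_single_left, EuclideanSpace.single_apply]
  simp [Subtype.ext_iff, Prod.ext_iff, eq_comm, and_comm]

lemma dite_inner {n : ℕ} {c : Prop} [Decidable c] (f : c → EuclideanSpace ℂ (BIdx n)) (y) :
    (inner ℂ (if h : c then f h else 0) y : ℂ) = if h : c then inner ℂ (f h) y else 0 := by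
  split <;> simp

lemma inner_dite {n : ℕ} {c : Prop} [Decidable c] (f : c → EuclideanSpace ℂ (BIdx n)) (y) :
    (inner ℂ y (if h : c then f h else 0) : ℂ) = if h : c then inner ℂ y (f h) else 0 := by
  split <;> simp

lemma sum_delta {m : ℕ} (P : Prop) [Decidable P] (j : Fin m) :
    ∑ j' : Fin m, (if j' = j ∧ P then (1:ℂ) else 0) = if P then 1 else 0 := by
  simp [ite_and, Finset.sum_ite_eq']

noncomputable def Av (n : ℕ) (i : Fin (n+1)) (hi : 1 ≤ i.val) : EuclideanSpace ℂ (BIdx n) :=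
  ∑ j : Fin (n + 1), if h : i.val < j.val then e n i j (Or.inr ⟨hi, h⟩) else 0

noncomputable def Bv (n : ℕ) (i : Fin (n+1)) : EuclideanSpace ℂ (BIdx n) :=
  ∑ j : Fin (n + 1), if h : 1 ≤ j.val ∧ j.val < i.val then e n j i (Or.inr h) else 0

lemma v_eq (n : ℕ) (i : Fin (n+1)) (hi : 1 ≤ i.val) :
    v n i hi = ((Real.sqrt n : ℂ))⁻¹ •
      (e n 0 0 (Or.inl rfl) + Av n i hi - Bv n i) := rfl

lemma inner_eA (n : ℕ) (k : Fin (n+1)) (hk : 1 ≤ k.val) :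
    (inner ℂ (e n 0 0 (Or.inl rfl)) (Av n k hk) : ℂ) = 0 := by
  rw [Av, inner_sum]
  refine Finset.sum_eq_zero fun j _ => ?_
  rw [inner_dite]
  split
  · erw [inner_e]
    apply if_neg
    simp only [Fin.ext_iff, not_and, not_lt, not_le]
    intro h1; exfalso; revert h1; simp; omega
  · rfl

lemma inner_Ae (n : ℕ) (k : Fin (n+1)) (hk : 1 ≤ k.val) :
    (inner ℂ (Av n k hk) (e n 0 0 (Or.inl rfl)) : ℂ) = 0 := by
  rw [← inner_conj_symm, inner_eA]; simp

lemma inner_eB (n : ℕ) (k : Fin (n+1)) :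
    (inner ℂ (e n 0 0 (Or.inl rfl)) (Bv n k) : ℂ) = 0 := by
  rw [Bv, inner_sum]
  refine Finset.sum_eq_zero fun j _ => ?_
  rw [inner_dite]
  split
  · erw [inner_e]
    apply if_neg
    next hc _ =>
      simp only [Fin.ext_iff, not_and] at hc ⊢
      omega
  · rfl

lemma inner_Be (n : ℕ) (k : Fin (n+1)) :
    (inner ℂ (Bv n k) (e n 0 0 (Or.inl rfl)) : ℂ) = 0 := by
  rw [← inner_conj_symm, inner_eB]; simp

lemma inner_AA (n : ℕ) (i k : Fin (n+1)) (hi : 1 ≤ i.val) (hk : 1 ≤ k.val) :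
    (inner ℂ (Av n i hi) (Av n k hk) : ℂ) =
      ∑ j : Fin (n+1), if i = k ∧ i.val < j.val then 1 else 0 := by
  rw [Av, Av, sum_inner]
  have key : ∀ j : Fin (n+1), (inner ℂ (if h : i.val < j.val then e n i j (Or.inr ⟨hi, h⟩) else 0)
      (∑ j' : Fin (n+1), if h : k.val < j'.val then e n k j' (Or.inr ⟨hk, h⟩) else 0) : ℂ)
      = ∑ j' : Fin (n+1), if j' = j ∧ (i = k ∧ i.val < j.val) then 1 else 0 := by
    intro j
    rw [dite_inner]
    split
    · rw [inner_sum]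
      refine Finset.sum_congr rfl fun j' _ => ?_
      rw [inner_dite]
      split
      · erw [inner_e]
        split_ifs <;> first
          | rfl
          | (exfalso; simp only [Fin.ext_iff, not_and, not_lt, not_le] at *; omega)
      · symm; apply if_neg
        next hc => simp only [Fin.ext_iff, not_and, not_lt, not_le] at hc ⊢; omega
    · symm
      refine Finset.sum_eq_zero fun j' _ => ?_
      apply if_neg
      next hc => simp only [Fin.ext_iff, not_and, not_lt, not_le] at hc ⊢; omega
  rw [Finset.sum_congr rfl fun j _ => key j]
  exact Finset.sum_congr rfl fun j _ => sum_delta _ j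

lemma inner_BB (n : ℕ) (i k : Fin (n+1)) :
    (inner ℂ (Bv n i) (Bv n k) : ℂ) =
      ∑ j : Fin (n+1), if i = k ∧ 1 ≤ j.val ∧ j.val < i.val then 1 else 0 := by
  rw [Bv, Bv, sum_inner]
  have key : ∀ j : Fin (n+1), (inner ℂ (if h : 1 ≤ j.val ∧ j.val < i.val then e n j i (Or.inr h) else 0)
      (∑ j' : Fin (n+1), if h : 1 ≤ j'.val ∧ j'.val < k.val then e n j' k (Or.inr h) else 0) : ℂ)
      = ∑ j' : Fin (n+1), if j' = j ∧ (i = k ∧ 1 ≤ j.val ∧ j.val < i.val) then 1 else 0 := by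
    intro j
    rw [dite_inner]
    split
    · rw [inner_sum]
      refine Finset.sum_congr rfl fun j' _ => ?_
      rw [inner_dite]
      split
      · erw [inner_e]
        split_ifs <;> first
          | rfl
          | (exfalso; simp only [Fin.ext_iff, not_and, not_lt, not_le] at *; omega)
      · symm; apply if_neg
        next hc => simp only [Fin.ext_iff, not_and, not_lt, not_le] at hc ⊢; omega
    · symm
      refine Finset.sum_eq_zero fun j' _ => ?_
      apply if_neg
      next hc => simp only [Fin.ext_iff, not_and, not_lt, not_le] at hc ⊢; omega
  rw [Finset.sum_congr rfl fun j _ => key j]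
  exact Finset.sum_congr rfl fun j _ => sum_delta _ j

lemma inner_AB (n : ℕ) (i k : Fin (n+1)) (hi : 1 ≤ i.val) :
    (inner ℂ (Av n i hi) (Bv n k) : ℂ) = if i.val < k.val then 1 else 0 := by
  rw [Av, Bv, sum_inner]
  have key : ∀ j : Fin (n+1), (inner ℂ (if h : i.val < j.val then e n i j (Or.inr ⟨hi, h⟩) else 0)
      (∑ j' : Fin (n+1), if h : 1 ≤ j'.val ∧ j'.val < k.val then e n j' k (Or.inr h) else 0) : ℂ)
      = if j = k ∧ i.val < k.val then 1 else 0 := by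
    intro j
    rw [dite_inner]
    split
    · rw [inner_sum]
      have h2 : ∀ j' : Fin (n+1),
          (inner ℂ (e n i j (Or.inr ⟨hi, ‹_›⟩))
            (if h : 1 ≤ j'.val ∧ j'.val < k.val then e n j' k (Or.inr h) else 0) : ℂ)
          = if j' = i ∧ (j = k ∧ i.val < k.val) then 1 else 0 := by
        intro j'
        rw [inner_dite]
        split
        · erw [inner_e]
          split_ifs <;> first
            | rfl
            | (exfalso; simp only [Fin.ext_iff, not_and, not_lt, not_le] at *; omega)
        · symm; apply if_neg
          next hc => simp only [Fin.ext_iff, not_and, not_lt, not_le] at hc ⊢; omega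
      rw [Finset.sum_congr rfl fun j' _ => h2 j', sum_delta]
    · symm; apply if_neg
      next hc => simp only [Fin.ext_iff, not_and, not_lt, not_le] at hc ⊢; omega
  rw [Finset.sum_congr rfl fun j _ => key j, sum_delta _ k]

lemma inner_BA (n : ℕ) (i k : Fin (n+1)) (hk : 1 ≤ k.val) :
    (inner ℂ (Bv n i) (Av n k hk) : ℂ) = if k.val < i.val then 1 else 0 := by
  rw [← inner_conj_symm, inner_AB n k i hk]
  split <;> simp

theorem stmt7 (n : ℕ) (hn : 1 ≤ n) :
    (∀ (i : Fin (n + 1)) (hi : 1 ≤ i.val),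
        (inner ℂ (v n i hi) (v n i hi) : ℂ) = 1) ∧
    (∀ (i k : Fin (n + 1)) (hi : 1 ≤ i.val) (hk : 1 ≤ k.val), i ≠ k →
        (inner ℂ (v n i hi) (v n k hk) : ℂ) = 0) := by
  have hs : ((Real.sqrt n : ℂ)) * (Real.sqrt n : ℂ) = (n : ℂ) := by
    rw [← Complex.ofReal_mul, Real.mul_self_sqrt (by positivity)]
    norm_cast
  have hn0 : (n : ℂ) ≠ 0 := Nat.cast_ne_zero.mpr (by omega)
  constructor
  · intro i hi
    have hW : (inner ℂ (e n 0 0 (Or.inl rfl) + Av n i hi - Bv n i)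
        (e n 0 0 (Or.inl rfl) + Av n i hi - Bv n i) : ℂ) = n := by
      simp only [inner_sub_left, inner_sub_right, inner_add_left, inner_add_right]
      rw [inner_eA, inner_Ae, inner_eB, inner_Be, inner_AA, inner_BB,
        inner_AB, inner_BA]
      erw [inner_e]
      simp only [eq_self_iff_true, true_and, and_self, if_true, lt_self_iff_false, if_false]
      have hS : (∑ x : Fin (n+1), if i.val < x.val then (1:ℂ) else 0)
          + (∑ x : Fin (n+1), if 1 ≤ x.val ∧ x.val < i.val then (1:ℂ) else 0) = (n:ℂ) - 1 := by
        rw [← Finset.sum_add_distrib]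
        have hpt : ∀ j : Fin (n+1), ((if i.val < j.val then (1:ℂ) else 0)
            + (if 1 ≤ j.val ∧ j.val < i.val then (1:ℂ) else 0))
            = 1 - ((if j = 0 then (1:ℂ) else 0) + (if j = i then (1:ℂ) else 0)) := by
          intro j
          have hj0 : (j = 0) ↔ j.val = 0 := ⟨fun h => by subst h; rfl, fun h => Fin.ext h⟩
          have hji : (j = i) ↔ j.val = i.val := Fin.ext_iff
          by_cases c3 : j.val = 0
          · rw [if_neg (show ¬ i.val < j.val by omega),
              if_neg (show ¬ (1 ≤ j.val ∧ j.val < i.val) by omega),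
              if_pos (hj0.mpr c3), if_neg (show ¬ j = i by rw [hji]; omega)]
            norm_num
          · by_cases c4 : j.val = i.val
            · rw [if_neg (show ¬ i.val < j.val by omega),
                if_neg (show ¬ (1 ≤ j.val ∧ j.val < i.val) by omega),
                if_neg (show ¬ j = 0 by rw [hj0]; omega), if_pos (hji.mpr c4)]
              norm_num
            · rcases Nat.lt_or_ge i.val j.val with h | h
              · rw [if_pos h, if_neg (show ¬ (1 ≤ j.val ∧ j.val < i.val) by omega),
                  if_neg (show ¬ j = 0 by rw [hj0]; omega),
                  if_neg (show ¬ j = i by rw [hji]; omega)]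
                norm_num
              · rw [if_neg (show ¬ i.val < j.val by omega),
                  if_pos (show 1 ≤ j.val ∧ j.val < i.val by omega),
                  if_neg (show ¬ j = 0 by rw [hj0]; omega),
                  if_neg (show ¬ j = i by rw [hji]; omega)]
                norm_num
        rw [Finset.sum_congr rfl fun j _ => hpt j, Finset.sum_sub_distrib,
          Finset.sum_add_distrib]
        simp [Finset.sum_ite_eq', Finset.card_univ]
        try push_cast
        try ring
      linear_combination hS
    rw [v_eq, inner_smul_left, inner_smul_right, hW]
    rw [map_inv₀, Complex.conj_ofReal, ← mul_assoc, ← mul_inv, hs, inv_mul_cancel₀ hn0]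
  · intro i k hi hk hik
    have hW : (inner ℂ (e n 0 0 (Or.inl rfl) + Av n i hi - Bv n i)
        (e n 0 0 (Or.inl rfl) + Av n k hk - Bv n k) : ℂ) = 0 := by
      simp only [inner_sub_left, inner_sub_right, inner_add_left, inner_add_right]
      rw [inner_eA, inner_Ae, inner_eB, inner_Be, inner_AA, inner_BB,
        inner_AB, inner_BA]
      erw [inner_e]
      simp only [hik, false_and, if_false, Finset.sum_const_zero, and_self, if_true]
      have hne : i.val ≠ k.val := fun h => hik (Fin.ext h)
      rcases lt_or_gt_of_ne hne with h | h
      · rw [if_pos h, if_neg (by omega : ¬ k.val < i.val)]; try ring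
      · rw [if_pos h, if_neg (by omega : ¬ i.val < k.val)]; try ring
    rw [v_eq, v_eq, inner_smul_left, inner_smul_right, hW, mul_zero, mul_zero]
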